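/- arXiv:2312.03648 — 3 statements merged into one kernel-verified Lean document; each statement's English description precedes it below -/
import Mathlib

section
/- Let K be a field and let V₁, V₂, W₁, W₂ be K-vector spaces with linear maps f : V₁ → W₁ and g : V₂ → W₂. Then inside V₁ ⊗ V₂ one has ker(f ⊗ id_{V₂}) ∩ ker(id_{V₁} ⊗ g) = (ker f) ⊗ (ker g), i.e. the intersection of the two kernels equals the image of the canonical map (ker f) ⊗ (ker g) → V₁ ⊗ V₂. -/
open LinearMap TensorProduct

/-- Over a field (flat modules), `ker (f ⊗ id) = range (ι ⊗ id)` where `ι : ker f → V₁`. -/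
lemma ker_rTensor_eq (K V₁ V₂ W₁ : Type*) [Field K]
    [AddCommGroup V₁] [Module K V₁] [AddCommGroup V₂] [Module K V₂]
    [AddCommGroup W₁] [Module K W₁] (f : V₁ →ₗ[K] W₁) :
    LinearMap.ker (LinearMap.rTensor V₂ f)
      = LinearMap.range (LinearMap.rTensor V₂ (LinearMap.ker f).subtype) := by
  have h1 : f = (LinearMap.range f).subtype.comp f.rangeRestrict := by
    ext x; rfl
  have hinj : Function.Injective (LinearMap.rTensor V₂ (LinearMap.range f).subtype) :=
    Module.Flat.rTensor_preserves_injective_linearMap _ (Submodule.injective_subtype _)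
  have hker : LinearMap.ker (LinearMap.rTensor V₂ f)
      = LinearMap.ker (LinearMap.rTensor V₂ f.rangeRestrict) := by
    conv_lhs => rw [h1, LinearMap.rTensor_comp]
    exact LinearMap.ker_comp_of_ker_eq_bot _ (LinearMap.ker_eq_bot.mpr hinj)
  have hexact : Function.Exact (LinearMap.ker f).subtype f.rangeRestrict := by
    rw [LinearMap.exact_iff, LinearMap.ker_rangeRestrict, Submodule.range_subtype]
  have := rTensor_exact (M := ↥(LinearMap.ker f)) V₂ hexact f.surjective_rangeRestrict
  rw [hker, ← this.linearMap_ker_eq]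

lemma ker_lTensor_eq (K V₁ V₂ W₂ : Type*) [Field K]
    [AddCommGroup V₁] [Module K V₁] [AddCommGroup V₂] [Module K V₂]
    [AddCommGroup W₂] [Module K W₂] (g : V₂ →ₗ[K] W₂) :
    LinearMap.ker (LinearMap.lTensor V₁ g)
      = LinearMap.range (LinearMap.lTensor V₁ (LinearMap.ker g).subtype) := by
  have h1 : g = (LinearMap.range g).subtype.comp g.rangeRestrict := by
    ext x; rfl
  have hinj : Function.Injective (LinearMap.lTensor V₁ (LinearMap.range g).subtype) :=
    Module.Flat.lTensor_preserves_injective_linearMap _ (Submodule.injective_subtype _)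
  have hker : LinearMap.ker (LinearMap.lTensor V₁ g)
      = LinearMap.ker (LinearMap.lTensor V₁ g.rangeRestrict) := by
    conv_lhs => rw [h1, LinearMap.lTensor_comp]
    exact LinearMap.ker_comp_of_ker_eq_bot _ (LinearMap.ker_eq_bot.mpr hinj)
  have hexact : Function.Exact (LinearMap.ker g).subtype g.rangeRestrict := by
    rw [LinearMap.exact_iff, LinearMap.ker_rangeRestrict, Submodule.range_subtype]
  have := lTensor_exact (M := ↥(LinearMap.ker g)) V₁ hexact g.surjective_rangeRestrict
  rw [hker, ← this.linearMap_ker_eq]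

/-- For linear maps `f : V₁ → W₁`, `g : V₂ → W₂` of vector spaces
over a field `K`, inside `V₁ ⊗ V₂` one has
`ker (f ⊗ id) ⊓ ker (id ⊗ g) = image of (ker f) ⊗ (ker g)`. -/
theorem stmt0 (K V₁ V₂ W₁ W₂ : Type*) [Field K]
    [AddCommGroup V₁] [Module K V₁] [AddCommGroup V₂] [Module K V₂]
    [AddCommGroup W₁] [Module K W₁] [AddCommGroup W₂] [Module K W₂]
    (f : V₁ →ₗ[K] W₁) (g : V₂ →ₗ[K] W₂) :
    LinearMap.ker (LinearMap.rTensor V₂ f) ⊓ LinearMap.ker (LinearMap.lTensor V₁ g)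
      = LinearMap.range
          (TensorProduct.map (LinearMap.ker f).subtype (LinearMap.ker g).subtype) := by
  set ι₁ := (LinearMap.ker f).subtype
  set ι₂ := (LinearMap.ker g).subtype
  apply le_antisymm
  · rintro x ⟨hx1, hx2⟩
    rw [SetLike.mem_coe, ker_rTensor_eq K V₁ V₂ W₁ f] at hx1
    rw [SetLike.mem_coe, ker_lTensor_eq K V₁ V₂ W₂ g] at hx2
    obtain ⟨π₁, hπ₁⟩ := ι₁.exists_leftInverse_of_injective (Submodule.ker_subtype _)
    obtain ⟨π₂, hπ₂⟩ := ι₂.exists_leftInverse_of_injective (Submodule.ker_subtype _)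
    have hr : LinearMap.rTensor V₂ (ι₁.comp π₁) x = x := by
      obtain ⟨y, rfl⟩ := hx1
      rw [← LinearMap.comp_apply, ← LinearMap.rTensor_comp, LinearMap.comp_assoc, hπ₁,
        LinearMap.comp_id]
    have hl : LinearMap.lTensor V₁ (ι₂.comp π₂) x = x := by
      obtain ⟨y, rfl⟩ := hx2
      rw [← LinearMap.comp_apply, ← LinearMap.lTensor_comp, LinearMap.comp_assoc, hπ₂,
        LinearMap.comp_id]
    have key : TensorProduct.map (ι₁.comp π₁) (ι₂.comp π₂) x = x := by
      rw [← LinearMap.lTensor_comp_rTensor, LinearMap.comp_apply, hr, hl]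
    rw [TensorProduct.map_comp] at key
    exact ⟨TensorProduct.map π₁ π₂ x, key⟩
  · rintro x ⟨y, rfl⟩
    constructor
    · rw [SetLike.mem_coe, LinearMap.mem_ker, ← LinearMap.comp_apply,
        LinearMap.rTensor_comp_map]
      have : f.comp ι₁ = 0 := by ext v; exact v.2
      rw [this, TensorProduct.map_zero_left, LinearMap.zero_apply]
    · rw [SetLike.mem_coe, LinearMap.mem_ker, ← LinearMap.comp_apply,
        LinearMap.lTensor_comp_map]
      have : g.comp ι₂ = 0 := by ext v; exact v.2
      rw [this, TensorProduct.map_zero_right, LinearMap.zero_apply]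
end

section
/- Let R be a commutative ℚ-algebra and let f ∈ R[[z^{±1}, w^{±1}]] satisfy (z−w)^N f = 0 for some N ∈ ℕ. Then there exist unique c_0(w), …, c_{N−1}(w) ∈ R[[w^{±1}]] such that f = Σ_{j=0}^{N−1} (1/j!) c_j(w) (∂_w)^j δ(z−w), where δ(z−w) = Σ_{n∈ℤ} z^n w^{−n−1}. -/
open scoped BigOperators

/-- Multiplication by `(z - w)` on doubly-infinite formal series in `z, w`. -/
def mulZW {R : Type*} [CommRing R] (f : ℤ × ℤ → R) : ℤ × ℤ → R :=
  fun p => f (p.1 - 1, p.2) - f (p.1, p.2 - 1)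

/-- Formal partial derivative `∂_w` on doubly-infinite formal series. -/
def dW {R : Type*} [CommRing R] (f : ℤ × ℤ → R) : ℤ × ℤ → R :=
  fun p => (p.2 + 1) • f (p.1, p.2 + 1)

/-- The formal delta function `δ(z - w) = Σ_{n ∈ ℤ} z^n w^{-n-1}`. -/
def deltaZW {R : Type*} [CommRing R] : ℤ × ℤ → R :=
  fun p => if p.2 = -p.1 - 1 then 1 else 0

/-- Product of a one-variable series `c(w)` with a two-variable series `g(z,w)`:
the coefficient of `z^a w^b` is the (finite, whenever defined) convolution
`Σ_n c(b - n) g(a, n)`. -/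
noncomputable def mulW {R : Type*} [CommRing R] (c : ℤ → R) (g : ℤ × ℤ → R) : ℤ × ℤ → R :=
  fun p => ∑ᶠ n : ℤ, c (p.2 - n) * g (p.1, n)

namespace Stmt2Aux

/-- The binomial polynomial `t(t-1)⋯(t-j+1)/j!` evaluated at an integer, as a rational. -/
noncomputable def qbin (t : ℤ) (j : ℕ) : ℚ :=
  (j.factorial : ℚ)⁻¹ * ∏ k ∈ Finset.range j, ((t : ℚ) - k)

/-- Forward difference operator on functions `ℤ → R`. -/
def D {R : Type*} [CommRing R] (g : ℤ → R) : ℤ → R := fun t => g (t + 1) - g t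

lemma qbin_zero (t : ℤ) : qbin t 0 = 1 := by simp [qbin]

lemma qbin_zero_succ (j : ℕ) : qbin 0 (j + 1) = 0 := by
  have h : (((0 : ℤ) : ℚ) - ((0 : ℕ) : ℚ)) = 0 := by norm_num
  rw [qbin, Finset.prod_eq_zero (Finset.mem_range.mpr (Nat.succ_pos j)) h, mul_zero]

lemma qbin_pascal (t : ℤ) (j : ℕ) :
    qbin (t + 1) (j + 1) - qbin t (j + 1) = qbin t j := by
  have h1 : ∏ k ∈ Finset.range (j + 1), (((t + 1 : ℤ) : ℚ) - k)
      = ((t : ℚ) + 1) * ∏ k ∈ Finset.range j, ((t : ℚ) - k) := by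
    rw [Finset.prod_range_succ']
    have h : ∀ k ∈ Finset.range j, (((t + 1 : ℤ) : ℚ) - ((k + 1 : ℕ) : ℚ)) = ((t : ℚ) - k) := by
      intro k _; push_cast; ring
    rw [Finset.prod_congr rfl h]
    push_cast; ring
  have h2 : ∏ k ∈ Finset.range (j + 1), ((t : ℚ) - k)
      = (∏ k ∈ Finset.range j, ((t : ℚ) - k)) * ((t : ℚ) - j) :=
    Finset.prod_range_succ _ _
  have hfac : ((j.factorial : ℚ)) ≠ 0 := Nat.cast_ne_zero.mpr j.factorial_ne_zero
  have hfac1 : (((j + 1).factorial : ℚ)) ≠ 0 := Nat.cast_ne_zero.mpr (j + 1).factorial_ne_zero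
  simp only [qbin, h1, h2, Nat.factorial_succ]
  push_cast
  field_simp
  ring

variable {R : Type*} [CommRing R] [Algebra ℚ R]

lemma D_sum_qbin (M : ℕ) (r : ℕ → R) :
    D (fun t => ∑ j ∈ Finset.range (M + 1), qbin t j • r j)
      = fun t => ∑ j ∈ Finset.range M, qbin t j • r (j + 1) := by
  funext t
  simp only [D]
  rw [← Finset.sum_sub_distrib, Finset.sum_range_succ']
  have h0 : qbin (t + 1) 0 • r 0 - qbin t 0 • r 0 = 0 := by
    rw [qbin_zero, qbin_zero]; exact sub_self _
  rw [h0, add_zero]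
  refine Finset.sum_congr rfl fun j _ => ?_
  rw [← sub_smul, qbin_pascal]

lemma eq_zero_of_D (u : ℤ → R) (h : D u = 0) (h0 : u 0 = 0) : ∀ t, u t = 0 := by
  have key : ∀ t : ℤ, u (t + 1) = u t := by
    intro t
    have := congrFun h t
    simp only [D, Pi.zero_apply, sub_eq_zero] at this
    exact this
  intro t
  induction t using Int.induction_on with
  | zero => exact h0
  | succ n ih => rw [key]; exact ih
  | pred n ih =>
      have := key (-(n : ℤ) - 1)
      simp only [sub_add_cancel] at this
      rw [← this]
      exact ih

lemma newton : ∀ (N : ℕ) (g : ℤ → R), D^[N] g = 0 →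
    ∀ t, g t = ∑ j ∈ Finset.range N, qbin t j • (D^[j] g 0) := by
  intro N
  induction N with
  | zero =>
      intro g hg t
      simp only [Function.iterate_zero, id_eq] at hg
      simp [hg]
  | succ N ih =>
      intro g hg t
      have hD : D^[N] (D g) = 0 := by
        rw [← Function.iterate_succ_apply]; exact hg
      have IH := ih (D g) hD
      set S : ℤ → R := fun t => ∑ j ∈ Finset.range (N + 1), qbin t j • (D^[j] g 0) with hS
      set u : ℤ → R := fun t => g t - S t with hu
      have hDS : D S = fun t => ∑ j ∈ Finset.range N, qbin t j • (D^[j] (D g) 0) := by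
        rw [hS, D_sum_qbin]
        funext t
        refine Finset.sum_congr rfl fun j _ => ?_
        rw [Function.iterate_succ_apply]
      have hDu : D u = 0 := by
        funext s
        have h1 : D u s = D g s - D S s := by simp only [D, hu]; ring
        have h2 : D S s = ∑ j ∈ Finset.range N, qbin s j • (D^[j] (D g) 0) :=
          congrFun hDS s
        rw [Pi.zero_apply, h1, h2, ← IH s, sub_self]
      have hu0 : u 0 = 0 := by
        have hS0 : S 0 = g 0 := by
          show ∑ j ∈ Finset.range (N + 1), qbin (0 : ℤ) j • (D^[j] g 0) = g 0
          rw [Finset.sum_range_succ']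
          have hz : ∀ j ∈ Finset.range N, qbin 0 (j + 1) • (D^[j + 1] g 0) = 0 := by
            intro j _; rw [qbin_zero_succ, zero_smul]
          rw [Finset.sum_congr rfl hz, Finset.sum_const_zero, zero_add, qbin_zero, one_smul]
          simp
        simp [hu, hS0]
      have := eq_zero_of_D u hDu hu0 t
      have : g t - S t = 0 := this
      rw [sub_eq_zero] at this
      exact this

lemma newton_unique : ∀ (N : ℕ) (r : ℕ → R),
    (∀ t, ∑ j ∈ Finset.range N, qbin t j • r j = 0) → ∀ j < N, r j = 0 := by
  intro N
  induction N with
  | zero => intro r _ j hj; omega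
  | succ N ih =>
      intro r H
      have H0 : r 0 = 0 := by
        have h := H 0
        rw [Finset.sum_range_succ'] at h
        have hz : ∀ j ∈ Finset.range N, qbin 0 (j + 1) • r (j + 1) = 0 := by
          intro j _; rw [qbin_zero_succ, zero_smul]
        rw [Finset.sum_congr rfl hz, Finset.sum_const_zero, zero_add, qbin_zero, one_smul] at h
        exact h
      have Hs : ∀ t, ∑ j ∈ Finset.range N, qbin t j • r (j + 1) = 0 := by
        intro t
        have h1 := congrFun (D_sum_qbin N r) t
        rw [← h1]
        simp only [D, H]
        exact sub_self _
      have hsucc := ih (fun j => r (j + 1)) Hs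
      intro j hj
      cases j with
      | zero => exact H0
      | succ j => exact hsucc j (by omega)

lemma dW_iter {R : Type*} [CommRing R] (j : ℕ) (g : ℤ × ℤ → R) :
    ∀ p : ℤ × ℤ, (dW^[j] g) p = (∏ i ∈ Finset.range j, (p.2 + i + 1)) • g (p.1, p.2 + j) := by
  induction j with
  | zero => intro p; simp
  | succ j ih =>
      intro p
      rw [Function.iterate_succ_apply']
      show (p.2 + 1) • (dW^[j] g) (p.1, p.2 + 1) = _
      rw [ih (p.1, p.2 + 1)]
      rw [smul_smul]
      have hprod : ∏ i ∈ Finset.range (j + 1), (p.2 + (i : ℤ) + 1)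
          = (p.2 + 1) * ∏ i ∈ Finset.range j, ((p.2 + 1) + (i : ℤ) + 1) := by
        rw [Finset.prod_range_succ']
        have h : ∀ i ∈ Finset.range j, (p.2 + ((i + 1 : ℕ) : ℤ) + 1) = ((p.2 + 1) + (i : ℤ) + 1) := by
          intro i _; push_cast; ring
        rw [Finset.prod_congr rfl h]
        push_cast; ring
      rw [hprod]
      have harg : p.2 + 1 + (j : ℤ) = p.2 + ((j + 1 : ℕ) : ℤ) := by push_cast; ring
      rw [harg]

lemma mulW_dW_delta (c : ℤ → R) (j : ℕ) (a b : ℤ) :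
    mulW c ((dW (R := R))^[j] deltaZW) (a, b)
      = (∏ k ∈ Finset.range j, (-a - 1 - k : ℤ)) • c (a + b + 1 + j) := by
  have hterm : ∀ n : ℤ, ((dW (R := R))^[j] deltaZW) (a, n)
      = (∏ i ∈ Finset.range j, (n + i + 1)) • (if n = -a - 1 - j then (1 : R) else 0) := by
    intro n
    rw [dW_iter j deltaZW (a, n)]
    have : deltaZW (R := R) (a, n + j) = if n = -a - 1 - j then (1 : R) else 0 := by
      simp only [deltaZW]
      congr 1
      simp only [eq_iff_iff]
      omega
    rw [this]
  have hvanish : ∀ n : ℤ, n ≠ -a - 1 - j →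
      c (b - n) * ((dW (R := R))^[j] deltaZW) (a, n) = 0 := by
    intro n hn
    rw [hterm n, if_neg hn, smul_zero, mul_zero]
  show (∑ᶠ n : ℤ, c (b - n) * ((dW (R := R))^[j] deltaZW) (a, n)) = _
  rw [finsum_eq_single _ (-a - 1 - (j : ℤ)) hvanish]
  rw [hterm, if_pos rfl, zsmul_eq_mul, mul_one]
  have hb : b - (-a - 1 - (j : ℤ)) = a + b + 1 + j := by ring
  rw [hb]
  have hprod : ∏ i ∈ Finset.range j, ((-a - 1 - (j : ℤ)) + i + 1)
      = ∏ k ∈ Finset.range j, (-a - 1 - (k : ℤ)) := by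
    rw [← Finset.prod_range_reflect (fun k => (-a - 1 - (k : ℤ))) j]
    refine Finset.prod_congr rfl fun i hi => ?_
    have hi' : i < j := Finset.mem_range.mp hi
    have : ((j - 1 - i : ℕ) : ℤ) = (j : ℤ) - 1 - i := by omega
    rw [this]; ring
  rw [hprod, mul_comm, ← zsmul_eq_mul]

lemma term_eval (c : ℤ → R) (j : ℕ) (a b : ℤ) :
    (((j.factorial : ℚ))⁻¹ • mulW c ((dW (R := R))^[j] deltaZW)) (a, b)
      = qbin (-a - 1) j • c (a + b + 1 + j) := by
  rw [Pi.smul_apply, mulW_dW_delta]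
  have hcast : (∏ k ∈ Finset.range j, (-a - 1 - k : ℤ)) • c (a + b + 1 + j)
      = ((∏ k ∈ Finset.range j, (((-a - 1 : ℤ) : ℚ) - k)) : ℚ) • c (a + b + 1 + j) := by
    have : (∏ k ∈ Finset.range j, (((-a - 1 : ℤ) : ℚ) - k))
        = (((∏ k ∈ Finset.range j, (-a - 1 - k : ℤ)) : ℤ) : ℚ) := by
      push_cast; ring
    rw [this, Int.cast_smul_eq_zsmul]
  rw [hcast, qbin, mul_smul]

lemma eval_sum (N : ℕ) (c : Fin N → ℤ → R) (a b : ℤ) :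
    (∑ j : Fin N, ((j.1.factorial : ℚ)⁻¹) • mulW (c j) ((dW (R := R))^[j.1] deltaZW)) (a, b)
      = ∑ j : Fin N, qbin (-a - 1) j.1 • c j (a + b + 1 + j.1) := by
  rw [Finset.sum_apply]
  exact Finset.sum_congr rfl fun j _ => term_eval (c j) j.1 a b

end Stmt2Aux

-- diagonal slice intertwining lemmas
namespace Stmt2Aux

variable {R : Type*} [CommRing R] [Algebra ℚ R]

omit [Algebra ℚ R] in
lemma diag_mulZW (f : ℤ × ℤ → R) (m : ℤ) :
    (fun t => mulZW f (-t - 1, m + t)) = D (fun t => f (-t - 1, (m - 1) + t)) := by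
  funext t
  simp only [mulZW, D]
  have c1 : ((-t - 1 - 1 : ℤ), (m + t : ℤ)) = ((-(t + 1) - 1 : ℤ), ((m - 1) + (t + 1) : ℤ)) := by
    simp only [Prod.mk.injEq]; constructor <;> ring
  have c2 : ((-t - 1 : ℤ), (m + t - 1 : ℤ)) = ((-t - 1 : ℤ), ((m - 1) + t : ℤ)) := by
    congr 1; ring
  rw [c1, c2]

omit [Algebra ℚ R] in
lemma diag_iter : ∀ (k : ℕ) (f : ℤ × ℤ → R) (m : ℤ),
    (fun t => ((mulZW (R := R))^[k] f) (-t - 1, m + t))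
      = D^[k] (fun t => f (-t - 1, (m - k) + t)) := by
  intro k
  induction k with
  | zero =>
      intro f m
      simp only [Function.iterate_zero, id_eq, Nat.cast_zero, sub_zero]
  | succ k ih =>
      intro f m
      have h1 : (fun t => ((mulZW (R := R))^[k + 1] f) (-t - 1, m + t))
          = (fun t => ((mulZW (R := R))^[k] (mulZW f)) (-t - 1, m + t)) := by
        funext t; rw [Function.iterate_succ_apply]
      rw [h1, ih (mulZW f) m, Function.iterate_succ_apply]
      congr 1
      rw [diag_mulZW f (m - k)]
      congr 1
      funext t
      have : (m - (k : ℤ) - 1) = (m - ((k + 1 : ℕ) : ℤ)) := by push_cast; ring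
      rw [this]

end Stmt2Aux

open Stmt2Aux in
/-- If `(z - w)^N f = 0` then there are unique one-variable series
`c_0(w), …, c_{N-1}(w)` with `f = Σ_{j<N} (1/j!) c_j(w) ∂_w^j δ(z - w)`. -/
theorem stmt2 {R : Type*} [CommRing R] [Algebra ℚ R] (N : ℕ) (f : ℤ × ℤ → R)
    (hf : (mulZW (R := R))^[N] f = 0) :
    ∃! c : Fin N → (ℤ → R),
      f = ∑ j : Fin N,
        ((j.1.factorial : ℚ)⁻¹) • mulW (c j) ((dW (R := R))^[j.1] deltaZW) := by
  classical
  -- each diagonal of f is annihilated by D^N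
  have hg : ∀ m : ℤ, D^[N] (fun t => f (-t - 1, m + t)) = 0 := by
    intro m
    have h := diag_iter N f (m + N)
    rw [hf] at h
    have hm : (m + (N : ℤ)) - N = m := by ring
    rw [hm] at h
    have hzero : (fun t : ℤ => (0 : ℤ × ℤ → R) (-t - 1, m + (N : ℤ) + t)) = (0 : ℤ → R) := rfl
    rw [hzero] at h
    exact h.symm
  -- a key claim: any solution is given by the Newton coefficients of the diagonals
  have claim : ∀ (c : Fin N → ℤ → R),
      (f = ∑ j : Fin N,
        ((j.1.factorial : ℚ)⁻¹) • mulW (c j) ((dW (R := R))^[j.1] deltaZW)) →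
      ∀ (j : Fin N) (v : ℤ),
        c j v = D^[j.1] (fun t => f (-t - 1, (v - j.1) + t)) 0 := by
    intro c hcc j0 v
    set m : ℤ := v - (j0.1 : ℤ) with hmv
    set d : ℕ → R := fun i => D^[i] (fun t => f (-t - 1, m + t)) 0 with hd
    -- evaluation of the equation on the diagonal m
    have hev : ∀ t : ℤ, f (-t - 1, m + t) = ∑ i : Fin N, qbin t i.1 • c i (m + i.1) := by
      intro t
      have h1 := congrFun hcc (-t - 1, m + t)
      rw [eval_sum N c (-t - 1) (m + t)] at h1
      rw [show (-(-t - 1) - 1 : ℤ) = t from by ring] at h1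
      rw [show (-t - 1 + (m + t) + 1 : ℤ) = m from by ring] at h1
      exact h1
    -- Newton expansion of the diagonal
    have hnewt : ∀ t : ℤ, f (-t - 1, m + t) = ∑ i ∈ Finset.range N, qbin t i • d i :=
      fun t => newton N (fun s => f (-s - 1, m + s)) (hg m) t
    -- the difference coefficients vanish
    set r : ℕ → R := fun i => if h : i < N then c ⟨i, h⟩ (m + i) - d i else 0 with hr
    have hrzero : ∀ t : ℤ, ∑ i ∈ Finset.range N, qbin t i • r i = 0 := by
      intro t
      have hsplit : ∀ i ∈ Finset.range N,
          qbin t i • r i = (if h : i < N then qbin t i • c ⟨i, h⟩ (m + i) else 0)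
            - qbin t i • d i := by
        intro i hi
        have hiN : i < N := Finset.mem_range.mp hi
        rw [hr]
        simp only [dif_pos hiN]
        rw [smul_sub]
      rw [Finset.sum_congr rfl hsplit, Finset.sum_sub_distrib]
      have hfin : ∑ i ∈ Finset.range N,
          (if h : i < N then qbin t i • c ⟨i, h⟩ (m + i) else 0)
            = ∑ i : Fin N, qbin t i.1 • c i (m + i.1) := by
        rw [← Fin.sum_univ_eq_sum_range
          (fun i => if h : i < N then qbin t i • c ⟨i, h⟩ (m + i) else 0) N]
        refine Finset.sum_congr rfl fun i _ => ?_
        rw [dif_pos i.2]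
      rw [hfin, ← hev t, ← hnewt t, sub_self]
    have hr0 := newton_unique N r hrzero j0.1 j0.2
    rw [hr] at hr0
    simp only [dif_pos j0.2] at hr0
    rw [sub_eq_zero] at hr0
    have hfix : c ⟨j0.1, j0.2⟩ (m + (j0.1 : ℤ)) = c j0 v := by
      congr 1
      rw [hmv]; ring
    rw [hfix] at hr0
    exact hr0
  -- the candidate coefficients
  refine ⟨fun j v => D^[j.1] (fun t => f (-t - 1, (v - j.1) + t)) 0, ?_, ?_⟩
  · -- existence
    funext p
    obtain ⟨a, b⟩ := p
    rw [eval_sum]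
    have key := fun t => newton N (fun s => f (-s - 1, (a + b + 1) + s)) (hg (a + b + 1)) t
    have e : f (-(-a - 1) - 1, (a + b + 1) + (-a - 1)) = f (a, b) := by
      congr 1
      simp only [Prod.mk.injEq]; constructor <;> ring
    have key2 : f (a, b)
        = ∑ i ∈ Finset.range N, qbin (-a - 1) i •
            (D^[i] (fun t => f (-t - 1, (a + b + 1) + t)) 0) := by
      rw [← e]; exact key (-a - 1)
    rw [key2, ← Fin.sum_univ_eq_sum_range
      (fun i => qbin (-a - 1) i • (D^[i] (fun t => f (-t - 1, (a + b + 1) + t)) 0)) N]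
    refine Finset.sum_congr rfl fun j _ => ?_
    show qbin (-a - 1) j.1 • (D^[j.1] (fun t => f (-t - 1, (a + b + 1) + t)) 0)
      = qbin (-a - 1) j.1 •
          (D^[j.1] (fun t => f (-t - 1, ((a + b + 1 + (j.1 : ℤ)) - (j.1 : ℤ)) + t)) 0)
    rw [show (a + b + 1 + (j.1 : ℤ)) - (j.1 : ℤ) = a + b + 1 from by ring]
  · -- uniqueness
    intro c' hc'
    funext j v
    exact claim c' hc' j v
end

section
/- Let K be a field of characteristic 0, k ∈ K nonzero, λ ∈ K, and let F = K[b_{−1}, b_{−2}, …] be the Fock module of the rank-1 Heisenberg algebra at level k, on which b_{−n} (n > 0) acts by multiplication, b_n (n > 0) acts as n k ∂/∂b_{−n}, and b₀ acts by 0. Define operators L_n = (1/(2k)) Σ_{j∈ℤ} :b_{n−j} b_j: − λ (n+1) b_n for n ∈ ℤ, where :b_i b_j: puts the annihilation operator (larger index) to the right. Then the L_n are well-defined on F and satisfy the Virasoro relations [L_m, L_n] = (m−n) L_{m+n} + ((m³−m)/12) δ_{m+n,0} c · id with central charge c = 1 − 12 k λ². -/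
open scoped BigOperators

/-- The Fock module `F = K[b_{−1}, b_{−2}, …]` of the rank-1 Heisenberg algebra:
a polynomial ring with one variable for each positive integer (the variable
indexed by `n > 0` representing `b_{−n}`). -/
abbrev Fock (K : Type*) [Field K] := MvPolynomial {n : ℕ // 0 < n} K

/-- The action of the Heisenberg mode `b_m` on the Fock module at level `k`:
for `m < 0`, multiplication by the variable `b_m`; for `m > 0`, the operator
`m k ∂/∂b_{−m}`; and `b₀` acts by `0`. -/
noncomputable def Bop (K : Type*) [Field K] (k : K) (m : ℤ) : Module.End K (Fock K) :=
  if h : m < 0 then LinearMap.mulLeft K (MvPolynomial.X ⟨(-m).toNat, by omega⟩)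
  else if h' : 0 < m then
    ((m : K) * k) • (MvPolynomial.pderiv (⟨m.toNat, by omega⟩ : {n : ℕ // 0 < n})).toLinearMap
  else 0

/-- The normally ordered product `:b_i b_j:`, with the annihilation operator
(larger index) to the right. -/
noncomputable def NOp (K : Type*) [Field K] (k : K) (i j : ℤ) : Module.End K (Fock K) :=
  if i ≤ j then Bop K k i * Bop K k j else Bop K k j * Bop K k i

/-- The Virasoro operator `L_n = (1/(2k)) Σ_{j∈ℤ} :b_{n−j} b_j: − λ(n+1) b_n` on the
Fock module; applied to any vector, only finitely many summands are nonzero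
(recorded via `finsum`). -/
noncomputable def Lop (K : Type*) [Field K] (k lam : K) (n : ℤ) (v : Fock K) : Fock K :=
  (1 / (2 * k)) • (∑ᶠ j : ℤ, NOp K k (n - j) j v) - (lam * ((n : K) + 1)) • Bop K k n v

set_option linter.unusedSectionVars false

namespace FF

open MvPolynomial

variable {K : Type*} [Field K] [CharZero K] (k lam : K)

/-- `vX m` is the variable `b_{-m}` for `m > 0`, else `0`. -/
noncomputable def vX (K : Type*) [Field K] (m : ℤ) : Fock K :=
  if h : 0 < m then X ⟨m.toNat, by omega⟩ else 0

lemma Bop_neg_apply {m : ℤ} (hm : m < 0) (v : Fock K) :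
    Bop K k m v = vX K (-m) * v := by
  rw [Bop, dif_pos hm, vX, dif_pos (by omega : (0:ℤ) < -m)]
  rfl

lemma Bop_pos_apply {m : ℤ} (hm : 0 < m) (v : Fock K) :
    Bop K k m v = ((m : K) * k) •
      pderiv (⟨m.toNat, by omega⟩ : {n : ℕ // 0 < n}) v := by
  rw [Bop, dif_neg (by omega), dif_pos hm]
  rfl

lemma Bop_zero : Bop K k 0 = 0 := by
  rw [Bop, dif_neg (by omega), dif_neg (by omega)]

lemma pderiv_comm (a b : {n : ℕ // 0 < n}) (p : Fock K) :
    pderiv a (pderiv b p) = pderiv b (pderiv a p) := by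
  induction p using MvPolynomial.induction_on with
  | C c => simp
  | add p q hp hq => simp [hp, hq]
  | mul_X p i hp =>
      simp only [pderiv_mul, map_add, pderiv_mul, hp]
      by_cases hai : a = i <;> by_cases hbi : b = i <;>
        simp [pderiv_X, hai, hbi, Pi.single_apply, mul_comm]

lemma pderiv_smul (a : {n : ℕ // 0 < n}) (c : K) (w : Fock K) :
    pderiv a (c • w) = c • pderiv a w := by
  rw [smul_eq_C_mul, pderiv_C_mul, smul_eq_C_mul]

private lemma cast_eq_neg {i j : ℤ} (h : i + j = 0) : (i : K) = -(j : K) := by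
  have : (i:ℤ) = -j := by omega
  exact_mod_cast congrArg (Int.cast : ℤ → K) this

private lemma Bop_comm_aux {i j : ℤ} (hi : i < 0) (hj : 0 < j) (v : Fock K) :
    Bop K k i (Bop K k j v) =
      Bop K k j (Bop K k i v) + (if i + j = 0 then (i : K) * k else 0) • v := by
  rw [Bop_neg_apply k hi, Bop_neg_apply k hi, Bop_pos_apply k hj, Bop_pos_apply k hj,
    pderiv_mul, vX, dif_pos (by omega : (0:ℤ) < -i), pderiv_X, Pi.single_apply]
  by_cases hij : i + j = 0
  · have hba : (⟨(-i).toNat, by omega⟩ : {n : ℕ // 0 < n}) = ⟨j.toNat, by omega⟩ :=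
      Subtype.ext (show (-i).toNat = j.toNat by omega)
    rw [if_pos hij, if_pos hba, cast_eq_neg (K := K) hij]
    rw [mul_smul_comm]
    rw [smul_add, one_mul]
    module
  · have hba : (⟨(-i).toNat, by omega⟩ : {n : ℕ // 0 < n}) ≠ ⟨j.toNat, by omega⟩ := by
      intro h
      have := congrArg (fun x => x.1) h
      simp only at this
      omega
    rw [if_neg hij, if_neg hba]
    rw [mul_smul_comm]
    simp

lemma Bop_comm (i j : ℤ) (v : Fock K) :
    Bop K k i (Bop K k j v) =
      Bop K k j (Bop K k i v) + (if i + j = 0 then (i : K) * k else 0) • v := by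
  rcases lt_trichotomy i 0 with hi | hi | hi
  · rcases lt_trichotomy j 0 with hj | hj | hj
    · rw [if_neg (by omega)]
      simp only [Bop_neg_apply k hi, Bop_neg_apply k hj, zero_smul, add_zero]
      ring
    · subst hj
      rw [if_neg (show ¬ i + 0 = 0 by omega)]
      simp [Bop_zero]
    · exact Bop_comm_aux k hi hj v
  · subst hi
    by_cases hj : j = 0
    · subst hj; simp [Bop_zero]
    · rw [if_neg (show ¬ (0:ℤ) + j = 0 by omega)]
      simp [Bop_zero]
  · rcases lt_trichotomy j 0 with hj | hj | hj
    · have h := Bop_comm_aux (K := K) k hj hi v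
      rw [h]
      by_cases hij : i + j = 0
      · rw [if_pos (by omega : j + i = 0), if_pos hij, cast_eq_neg (K := K) hij,
          cast_eq_neg (K := K) (by omega : j + i = 0)]
        module
      · rw [if_neg (by omega : ¬ j + i = 0), if_neg hij]
        simp
    · subst hj
      rw [if_neg (show ¬ i + 0 = 0 by omega)]
      simp [Bop_zero]
    · rw [if_neg (by omega)]
      rw [Bop_pos_apply k hi, Bop_pos_apply k hj, Bop_pos_apply k hj, Bop_pos_apply k hi,
        pderiv_smul, pderiv_smul, pderiv_comm, smul_comm]
      simp


-- continuation of part1 (will concatenate)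

/-- A bound above which all annihilation operators kill `v`. -/
noncomputable def bnd (v : Fock K) : ℤ :=
  ((v.vars.sup fun a => (a : ℕ)) : ℕ)

lemma bnd_nonneg (v : Fock K) : 0 ≤ bnd v := Int.natCast_nonneg _

lemma Bop_eq_zero_of_gt {v : Fock K} {j : ℤ} (hj : bnd v < j) : Bop K k j v = 0 := by
  have hj0 : 0 < j := lt_of_le_of_lt (bnd_nonneg v) hj
  rw [Bop_pos_apply k hj0]
  rw [pderiv_eq_zero_of_notMem_vars, smul_zero]
  intro hmem
  have hle := Finset.le_sup (f := fun (a : {n : ℕ // 0 < n}) => (a : ℕ)) hmem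
  simp only at hle
  unfold bnd at hj
  omega

lemma NOp_eq_zero_of_gt {v : Fock K} {i l : ℤ} (h : bnd v < max i l) :
    NOp K k i l v = 0 := by
  unfold NOp
  by_cases hil : i ≤ l
  · rw [if_pos hil]
    show Bop K k i (Bop K k l v) = 0
    rw [Bop_eq_zero_of_gt k (by omega : bnd v < l), map_zero]
  · rw [if_neg hil]
    show Bop K k l (Bop K k i v) = 0
    rw [Bop_eq_zero_of_gt k (by omega : bnd v < i), map_zero]

lemma NOp_support_subset (n : ℤ) (v : Fock K) :
    (Function.support fun j => NOp K k (n - j) j v) ⊆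
      ↑(Finset.Icc (n - bnd v) (bnd v)) := by
  intro j hj
  simp only [Function.mem_support] at hj
  simp only [Finset.coe_Icc, Set.mem_Icc]
  by_contra hcon
  push_neg at hcon
  apply hj
  apply NOp_eq_zero_of_gt
  rcases le_or_gt (n - bnd v) j with h1 | h1
  · have := hcon h1
    omega
  · omega

lemma Lop_apply (n : ℤ) (v : Fock K) {s : Finset ℤ}
    (hs : Finset.Icc (n - bnd v) (bnd v) ⊆ s) :
    Lop K k lam n v =
      (1 / (2 * k)) • (∑ j ∈ s, NOp K k (n - j) j v)
        - (lam * ((n : K) + 1)) • Bop K k n v := by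
  unfold Lop
  rw [finsum_eq_sum_of_support_subset]
  exact (NOp_support_subset k n v).trans (Finset.coe_subset.2 hs)

lemma Lop_add (n : ℤ) (v w : Fock K) :
    Lop K k lam n (v + w) = Lop K k lam n v + Lop K k lam n w := by
  set N := max (max (bnd v) (bnd w)) (bnd (v + w)) with hN
  have h1 : bnd v ≤ N := le_trans (le_max_left _ _) (le_max_left _ _)
  have h2 : bnd w ≤ N := le_trans (le_max_right _ _) (le_max_left _ _)
  have h3 : bnd (v + w) ≤ N := le_max_right _ _
  have h0 : 0 ≤ N := le_trans (bnd_nonneg v) h1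
  rw [Lop_apply k lam n v (s := Finset.Icc (n - N) N)
      (Finset.Icc_subset_Icc (by omega) (by omega)),
    Lop_apply k lam n w (s := Finset.Icc (n - N) N)
      (Finset.Icc_subset_Icc (by omega) (by omega)),
    Lop_apply k lam n (v + w) (s := Finset.Icc (n - N) N)
      (Finset.Icc_subset_Icc (by omega) (by omega))]
  simp only [map_add, Finset.sum_add_distrib, smul_add]
  abel

lemma Lop_smul (n : ℤ) (c : K) (v : Fock K) :
    Lop K k lam n (c • v) = c • Lop K k lam n v := by
  set N := max (bnd v) (bnd (c • v)) with hN
  have h1 : bnd v ≤ N := le_max_left _ _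
  have h2 : bnd (c • v) ≤ N := le_max_right _ _
  have h0 : 0 ≤ N := le_trans (bnd_nonneg v) h1
  rw [Lop_apply k lam n v (s := Finset.Icc (n - N) N)
      (Finset.Icc_subset_Icc (by omega) (by omega)),
    Lop_apply k lam n (c • v) (s := Finset.Icc (n - N) N)
      (Finset.Icc_subset_Icc (by omega) (by omega))]
  simp only [map_smul, ← Finset.smul_sum]
  module

lemma Lop_zero (n : ℤ) : Lop K k lam n 0 = 0 := by
  rw [Lop_apply k lam n 0 (s := Finset.Icc (n - bnd 0) (bnd 0)) (subset_refl _)]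
  simp

lemma Lop_sub (n : ℤ) (v w : Fock K) :
    Lop K k lam n (v - w) = Lop K k lam n v - Lop K k lam n w := by
  have h : v - w = v + (-1 : K) • w := by module
  rw [h, Lop_add, Lop_smul]
  module

lemma NOp_Bop_comm (i l j : ℤ) (v : Fock K) :
    NOp K k i l (Bop K k j v) =
      Bop K k j (NOp K k i l v)
        + (if l = -j then ((l : K) * k) • Bop K k i v else 0)
        + (if i = -j then ((i : K) * k) • Bop K k l v else 0) := by
  have main : ∀ a b : ℤ, Bop K k a (Bop K k b (Bop K k j v)) =
      Bop K k j (Bop K k a (Bop K k b v))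
        + (if b = -j then ((b : K) * k) • Bop K k a v else 0)
        + (if a = -j then ((a : K) * k) • Bop K k b v else 0) := by
    intro a b
    rw [Bop_comm k b j v]
    rw [map_add, map_smul]
    rw [Bop_comm k a j (Bop K k b v)]
    have e1 : (if b + j = 0 then (b : K) * k else 0) • Bop K k a v
        = (if b = -j then ((b : K) * k) • Bop K k a v else 0) := by
      by_cases h : b + j = 0
      · rw [if_pos h, if_pos (by omega)]
      · rw [if_neg h, if_neg (by omega), zero_smul]
    have e2 : (if a + j = 0 then (a : K) * k else 0) • Bop K k b v
        = (if a = -j then ((a : K) * k) • Bop K k b v else 0) := by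
      by_cases h : a + j = 0
      · rw [if_pos h, if_pos (by omega)]
      · rw [if_neg h, if_neg (by omega), zero_smul]
    rw [← e1, ← e2]
    module
  unfold NOp
  by_cases hil : i ≤ l
  · rw [if_pos hil]
    show Bop K k i (Bop K k l _) = Bop K k j (Bop K k i (Bop K k l v)) + _ + _
    exact main i l
  · rw [if_neg hil]
    show Bop K k l (Bop K k i _) = Bop K k j (Bop K k l (Bop K k i v)) + _ + _
    rw [main l i]
    module

lemma key_comm (hk : k ≠ 0) (m j : ℤ) (v : Fock K) :
    Lop K k lam m (Bop K k j v) =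
      Bop K k j (Lop K k lam m v) + (-(j : K)) • Bop K k (m + j) v
        - (if m + j = 0 then lam * k * ((m : K) * ((m : K) + 1)) else 0) • v := by
  set N := max (max (bnd v) (bnd (Bop K k j v))) (max |j| |m + j|) with hN
  have h1 : bnd v ≤ N := le_trans (le_max_left _ _) (le_max_left _ _)
  have h2 : bnd (Bop K k j v) ≤ N := le_trans (le_max_right _ _) (le_max_left _ _)
  have hj1 : |j| ≤ N := le_trans (le_max_left _ _) (le_max_right _ _)
  have hj2 : |m + j| ≤ N := le_trans (le_max_right _ _) (le_max_right _ _)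
  have hja : -j ≤ |j| := neg_le_abs j
  have hjb : j ≤ |j| := le_abs_self j
  have hjc : m + j ≤ |m + j| := le_abs_self _
  have hjd : -(m + j) ≤ |m + j| := neg_le_abs _
  have h0 : 0 ≤ N := le_trans (bnd_nonneg v) h1
  set s : Finset ℤ := Finset.Icc (m - N) N with hs
  have hmem1 : -j ∈ s := by
    rw [hs, Finset.mem_Icc]
    constructor <;> linarith
  have hmem2 : m + j ∈ s := by
    rw [hs, Finset.mem_Icc]
    constructor <;> linarith
  rw [Lop_apply k lam m v (s := s) (Finset.Icc_subset_Icc (by linarith) (by linarith)),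
    Lop_apply k lam m (Bop K k j v) (s := s)
      (Finset.Icc_subset_Icc (by linarith) (by linarith))]
  -- push `Bop j` inside
  rw [map_sub, map_smul, map_smul, map_sum]
  -- rewrite each summand
  have hsum : ∑ l ∈ s, NOp K k (m - l) l (Bop K k j v)
      = (∑ l ∈ s, Bop K k j (NOp K k (m - l) l v))
        + ((-(j:K)) * k) • Bop K k (m + j) v
        + ((-(j:K)) * k) • Bop K k (m + j) v := by
    have step : ∀ l ∈ s, NOp K k (m - l) l (Bop K k j v)
        = Bop K k j (NOp K k (m - l) l v)
          + (if l = -j then ((l : K) * k) • Bop K k (m - l) v else 0)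
          + (if l = m + j then (((m : K) - (l : K)) * k) • Bop K k l v else 0) := by
      intro l _
      rw [NOp_Bop_comm]
      congr 1
      by_cases h : l = m + j
      · rw [if_pos (show m - l = -j by omega), if_pos h]
        congr 2
        push_cast
        ring
      · rw [if_neg (show ¬ m - l = -j by omega), if_neg h]
    rw [Finset.sum_congr rfl step]
    rw [Finset.sum_add_distrib, Finset.sum_add_distrib]
    rw [Finset.sum_ite_eq' s (-j) (fun l => ((l : K) * k) • Bop K k (m - l) v)]
    rw [Finset.sum_ite_eq' s (m + j)
      (fun l => (((m : K) - (l : K)) * k) • Bop K k l v)]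
    rw [if_pos hmem1, if_pos hmem2]
    have r1 : m - -j = m + j := by ring
    rw [r1]
    have c1 : ((-j : ℤ) : K) * k = (-(j:K)) * k := by push_cast; ring
    have c2 : ((m : K) - ((m + j : ℤ) : K)) * k = (-(j:K)) * k := by push_cast; ring
    rw [c1, c2]
  rw [hsum]
  rw [Bop_comm k m j v]
  have hcentral : (lam * ((m : K) + 1)) • ((if m + j = 0 then (m : K) * k else 0) • v)
      = (if m + j = 0 then lam * k * ((m : K) * ((m : K) + 1)) else 0) • v := by
    by_cases h : m + j = 0
    · rw [if_pos h, if_pos h, smul_smul]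
      ring_nf
    · rw [if_neg h, if_neg h]
      simp
  rw [smul_add (lam * ((m : K) + 1)), hcentral]
  have hsc : (1 / (2 * k)) • (((-(j:K)) * k) • Bop K k (m + j) v)
      = ((-(j : K))/2) • Bop K k (m + j) v := by
    rw [smul_smul]
    congr 1
    field_simp
  rw [smul_add, smul_add, hsc]
  module

noncomputable def gam (m : ℤ) : K :=
  (((m : K) ^ 3 - (m : K)) / 12) * (1 - 12 * k * lam ^ 2)

noncomputable def Cop (m n : ℤ) (v : Fock K) : Fock K :=
  Lop K k lam m (Lop K k lam n v) - Lop K k lam n (Lop K k lam m v)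
    - ((m : K) - (n : K)) • Lop K k lam (m + n) v
    - (if m + n = 0 then gam k lam m else 0) • v

lemma Cop_Bop_comm (hk : k ≠ 0) (m n j : ℤ) (v : Fock K) :
    Cop k lam m n (Bop K k j v) = Bop K k j (Cop k lam m n v) := by
  unfold Cop
  rw [key_comm k lam hk n j v, key_comm k lam hk m j v, key_comm k lam hk (m + n) j v]
  simp only [Lop_sub, Lop_add, Lop_smul]
  rw [key_comm k lam hk m j (Lop K k lam n v), key_comm k lam hk m (n + j) v,
    key_comm k lam hk n j (Lop K k lam m v), key_comm k lam hk n (m + j) v]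
  rw [map_sub, map_sub, map_sub, map_smul, map_smul]
  have a1 : m + (n + j) = m + n + j := by ring
  have a2 : n + (m + j) = m + n + j := by ring
  rw [a1, a2]
  by_cases h : m + n + j = 0
  · simp only [if_pos h]
    have hj : (j : K) = -(m : K) - (n : K) := by
      have : (j : ℤ) = -m - n := by omega
      exact_mod_cast congrArg (Int.cast : ℤ → K) this
    push_cast
    rw [hj]
    unfold gam
    module
  · simp only [if_neg h]
    push_cast
    module

lemma Bop_pos_one {m : ℤ} (hm : 0 < m) : Bop K k m (1 : Fock K) = 0 := by
  rw [Bop_pos_apply k hm, pderiv_one, smul_zero]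

lemma Bop_one (m : ℤ) : Bop K k m (1 : Fock K) = if m < 0 then vX K (-m) else 0 := by
  rcases lt_trichotomy m 0 with hm | hm | hm
  · rw [if_pos hm, Bop_neg_apply k hm, mul_one]
  · subst hm; rw [if_neg (by omega), Bop_zero]; rfl
  · rw [if_neg (by omega), Bop_pos_one k hm]

lemma NOp_one (i l : ℤ) :
    NOp K k i l (1 : Fock K) = if i < 0 ∧ l < 0 then vX K (-i) * vX K (-l) else 0 := by
  unfold NOp
  by_cases hil : i ≤ l
  · rw [if_pos hil]
    show Bop K k i (Bop K k l 1) = _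
    rw [Bop_one]
    by_cases hl : l < 0
    · rw [if_pos hl, Bop_neg_apply k (lt_of_le_of_lt hil hl), if_pos ⟨lt_of_le_of_lt hil hl, hl⟩]
    · rw [if_neg hl, map_zero, if_neg (by tauto)]
  · rw [if_neg hil]
    show Bop K k l (Bop K k i 1) = _
    rw [Bop_one]
    by_cases hi : i < 0
    · rw [if_pos hi, Bop_neg_apply k (by omega : l < 0), if_pos ⟨hi, by omega⟩, mul_comm]
    · rw [if_neg hi, map_zero, if_neg (by tauto)]

/-- The quadratic part of `L_n` applied to the vacuum. -/
noncomputable def Qpoly (K : Type*) [Field K] (n : ℤ) : Fock K :=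
  ∑ j ∈ Finset.Ioo n (0:ℤ), vX K (j - n) * vX K (-j)

lemma bnd_one : bnd (1 : Fock K) = 0 := by
  unfold bnd
  rw [vars_one]
  rfl

lemma Lop_one (n : ℤ) :
    Lop K k lam n 1 = (1/(2*k)) • Qpoly K n
      - (lam * ((n:K)+1)) • (if n < 0 then vX K (-n) else 0) := by
  have hb1 : Finset.Icc (n - bnd (1 : Fock K)) (bnd (1 : Fock K)) ⊆ Finset.Icc (n - 0) 0 := by
    rw [bnd_one]
  rw [Lop_apply k lam n 1 hb1, Bop_one]
  congr 1
  congr 1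
  have e : ∀ j ∈ Finset.Icc (n - 0) (0:ℤ), NOp K k (n - j) j 1
      = if j ∈ Finset.Ioo n (0:ℤ) then vX K (j - n) * vX K (-j) else 0 := by
    intro j _
    rw [NOp_one]
    by_cases h : j ∈ Finset.Ioo n (0:ℤ)
    · rw [if_pos h]
      rw [Finset.mem_Ioo] at h
      rw [if_pos (by omega : n - j < 0 ∧ j < 0), neg_sub]
    · rw [if_neg h]
      rw [Finset.mem_Ioo] at h
      rw [if_neg (by omega)]
  rw [Finset.sum_congr rfl e, Finset.sum_ite_mem,
    Finset.inter_eq_right.mpr (fun j hj => by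
      rw [Finset.mem_Ioo] at hj; rw [Finset.mem_Icc]; omega)]
  rfl

lemma Bop_vX {j : ℤ} (hj : 0 < j) (a : ℤ) :
    Bop K k j (vX K a) = if j = a then ((j:K)*k) • 1 else 0 := by
  unfold vX
  by_cases ha0 : 0 < a
  · rw [dif_pos ha0, Bop_pos_apply k hj, pderiv_X, Pi.single_apply]
    by_cases h : j = a
    · rw [if_pos (Subtype.ext (show a.toNat = j.toNat by omega)), if_pos h]
    · rw [if_neg (fun hc => h (by
        have := congrArg (fun x => (x : {n : ℕ // 0 < n}).1) hc
        simp only at this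
        omega)), if_neg h, smul_zero]
  · rw [dif_neg ha0, map_zero, if_neg (by omega)]

lemma Bop_mul {j : ℤ} (hj : 0 < j) (p q : Fock K) :
    Bop K k j (p * q) = Bop K k j p * q + p * Bop K k j q := by
  rw [Bop_pos_apply k hj, Bop_pos_apply k hj, Bop_pos_apply k hj, pderiv_mul, smul_add,
    smul_mul_assoc, mul_smul_comm]

lemma Bop_Qpoly {j : ℤ} (hj : 0 < j) (n : ℤ) :
    Bop K k j (Qpoly K n) = if j < -n then ((2*(j:K))*k) • vX K (-n-j) else 0 := by
  unfold Qpoly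
  rw [map_sum]
  have e : ∀ j' ∈ Finset.Ioo n (0:ℤ), Bop K k j (vX K (j' - n) * vX K (-j'))
      = (if j' = j + n then ((j:K)*k) • vX K (-j') else 0)
        + (if j' = -j then ((j:K)*k) • vX K (j' - n) else 0) := by
    intro j' _
    rw [Bop_mul k hj, Bop_vX k hj, Bop_vX k hj]
    congr 1
    · by_cases h : j' = j + n
      · rw [if_pos (show j = j' - n by omega), if_pos h, smul_mul_assoc, one_mul]
      · rw [if_neg (show ¬ j = j' - n by omega), if_neg h, zero_mul]
    · by_cases h : j' = -j
      · rw [if_pos (show j = -j' by omega), if_pos h, mul_smul_comm, mul_one]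
      · rw [if_neg (show ¬ j = -j' by omega), if_neg h, mul_zero]
  rw [Finset.sum_congr rfl e, Finset.sum_add_distrib,
    Finset.sum_ite_eq' _ (j + n) (fun j' => ((j:K)*k) • vX K (-j')),
    Finset.sum_ite_eq' _ (-j) (fun j' => ((j:K)*k) • vX K (j' - n))]
  by_cases h : j < -n
  · have e1 : -(j + n) = -n - j := by ring
    have e2 : -j - n = -n - j := by ring
    rw [if_pos (by rw [Finset.mem_Ioo]; omega), if_pos (by rw [Finset.mem_Ioo]; omega),
      if_pos h, e1, e2, ← add_smul]
    congr 1
    ring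
  · rw [if_neg (by rw [Finset.mem_Ioo]; omega), if_neg (by rw [Finset.mem_Ioo]; omega),
      if_neg h, add_zero]

lemma cc_vX (a : ℤ) : constantCoeff (vX K a) = 0 := by
  unfold vX
  split
  · exact constantCoeff_X _ _
  · exact map_zero _

lemma cc_smul (c : K) (p : Fock K) : constantCoeff (c • p) = c * constantCoeff p := by
  rw [smul_eq_C_mul, map_mul, constantCoeff_C]

lemma cc_NOp (i l : ℤ) (h : i ≤ 0 ∨ l ≤ 0) (v : Fock K) :
    constantCoeff (NOp K k i l v) = 0 := by
  unfold NOp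
  by_cases hil : i ≤ l
  · rw [if_pos hil]
    show constantCoeff (Bop K k i (Bop K k l v)) = 0
    rcases lt_or_eq_of_le (show i ≤ 0 by omega) with hi | hi
    · rw [Bop_neg_apply k hi, map_mul, cc_vX, zero_mul]
    · rw [hi, Bop_zero]; simp
  · rw [if_neg hil]
    show constantCoeff (Bop K k l (Bop K k i v)) = 0
    rcases lt_or_eq_of_le (show l ≤ 0 by omega) with hl | hl
    · rw [Bop_neg_apply k hl, map_mul, cc_vX, zero_mul]
    · rw [hl, Bop_zero]; simp

lemma cc_Bop_nonpos {m : ℤ} (hm : m ≤ 0) (q : Fock K) :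
    constantCoeff (Bop K k m q) = 0 := by
  rcases lt_or_eq_of_le hm with h | h
  · rw [Bop_neg_apply k h, map_mul, cc_vX, zero_mul]
  · rw [h, Bop_zero]; simp

lemma cc_Lop_nonpos {m : ℤ} (hm : m ≤ 0) (q : Fock K) :
    constantCoeff (Lop K k lam m q) = 0 := by
  rw [Lop_apply k lam m q (subset_refl _), map_sub, cc_smul, cc_smul, map_sum]
  rw [Finset.sum_congr rfl (fun j _ => cc_NOp k (m - j) j (by omega) q),
    Finset.sum_const, smul_zero, mul_zero, cc_Bop_nonpos k hm, mul_zero, sub_zero]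

lemma Bop_Lop_one {l : ℤ} (hl : 0 < l) (n : ℤ) :
    Bop K k l (Lop K k lam n 1)
      = (1/(2*k)) • (if l < -n then ((2*(l:K))*k) • vX K (-n-l) else 0)
        - (lam * ((n:K)+1)) • (if l = -n then ((l:K)*k) • (1 : Fock K) else 0) := by
  rw [Lop_one, map_sub, map_smul, map_smul, Bop_Qpoly k hl]
  congr 2
  by_cases hn : n < 0
  · rw [if_pos hn, Bop_vX k hl]
  · rw [if_neg hn, map_zero, if_neg (by omega)]

lemma cc_BB (hk : k ≠ 0) {i l : ℤ} (hi : 0 < i) (hl : 0 < l) (n : ℤ) :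
    constantCoeff (Bop K k i (Bop K k l (Lop K k lam n 1)))
      = if i + l = -n then (i:K)*(l:K)*k else 0 := by
  rw [Bop_Lop_one k lam hl, map_sub, map_smul, map_smul]
  have h2 : Bop K k i (if l = -n then ((l:K)*k) • (1 : Fock K) else 0) = 0 := by
    by_cases h : l = -n
    · rw [if_pos h, map_smul, Bop_pos_one k hi, smul_zero]
    · rw [if_neg h, map_zero]
  rw [h2, smul_zero, sub_zero]
  by_cases h : i + l = -n
  · rw [if_pos (show l < -n by omega), if_pos h, cc_smul, map_smul, Bop_vX k hi,
      if_pos (show i = -n-l by omega), cc_smul, cc_smul, map_one]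
    field_simp
  · have h3 : Bop K k i (if l < -n then ((2*(l:K))*k) • vX K (-n-l) else 0) = 0 := by
      by_cases h1 : l < -n
      · rw [if_pos h1, map_smul, Bop_vX k hi, if_neg (show ¬ i = -n-l by omega), smul_zero]
      · rw [if_neg h1, map_zero]
    rw [if_neg h, h3, smul_zero, map_zero]

lemma natGauss (M : ℕ) : ∑ a ∈ Finset.range M, ((a:K)+1) = (M:K)*((M:K)+1)/2 := by
  induction M with
  | zero => simp
  | succ M ih =>
      rw [Finset.sum_range_succ, ih]
      push_cast
      ring

lemma natSum (M : ℕ) :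
    ∑ a ∈ Finset.range M, (((M:K)) - ((a:K)+1)) * ((a:K)+1) = ((M:K)^3 - M)/6 := by
  induction M with
  | zero => simp
  | succ M ih =>
      have e : ∀ a ∈ Finset.range M,
          ((((M+1:ℕ)):K) - ((a:K)+1)) * ((a:K)+1)
            = ((((M:ℕ)):K) - ((a:K)+1)) * ((a:K)+1) + ((a:K)+1) := by
        intro a _
        push_cast
        ring
      rw [Finset.sum_range_succ, Finset.sum_congr rfl e, Finset.sum_add_distrib, ih, natGauss]
      push_cast
      ring

lemma sum_Ioo (m : ℤ) (hm : 0 ≤ m) :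
    ∑ j ∈ Finset.Ioo (0:ℤ) m, ((m:K) - (j:K)) * (j:K) = ((m:K)^3 - (m:K))/6 := by
  rcases eq_or_lt_of_le hm with h0 | h0
  · rw [← h0]
    norm_num
  · have hins : Finset.Ioc (0:ℤ) m = insert m (Finset.Ioo (0:ℤ) m) :=
      (Finset.Ioo_insert_right h0).symm
    have hIoc : ∑ j ∈ Finset.Ioc (0:ℤ) m, ((m:K) - (j:K)) * (j:K)
        = ∑ j ∈ Finset.Ioo (0:ℤ) m, ((m:K) - (j:K)) * (j:K) := by
      rw [hins, Finset.sum_insert (by simp), sub_self, zero_mul, zero_add]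
    rw [← hIoc]
    obtain ⟨M, rfl⟩ : ∃ M : ℕ, m = (M:ℤ) := ⟨m.toNat, by omega⟩
    let emb : ℕ ↪ ℤ := ⟨fun a => ((a:ℤ)+1 : ℤ), by intro a b hab; simpa using hab⟩
    have hmap : Finset.Ioc (0:ℤ) (M:ℤ) = (Finset.range M).map emb := by
      ext j
      simp only [Finset.mem_Ioc, Finset.mem_map, Finset.mem_range,
        Function.Embedding.coeFn_mk, emb]
      constructor
      · intro hj
        refine ⟨(j-1).toNat, by omega, ?_⟩
        show ((j-1).toNat : ℤ) + 1 = j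
        omega
      · rintro ⟨a, ha, hae⟩
        have h2 : (a:ℤ) + 1 = j := hae
        omega
    rw [hmap, Finset.sum_map]
    simp only [Function.Embedding.coeFn_mk, emb]
    have e : ∀ a ∈ Finset.range M,
        (((M:ℤ):K) - (((a:ℤ)+1 : ℤ):K)) * (((a:ℤ)+1 : ℤ):K)
          = (((M:ℕ):K) - ((a:K)+1)) * ((a:K)+1) := by
      intro a _
      push_cast
      ring
    refine (Finset.sum_congr rfl e).trans ?_
    rw [natSum]
    push_cast
    ring

lemma cc_Lop_Lop_one (hk : k ≠ 0) {m : ℤ} (hm : 1 ≤ m) (n : ℤ) :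
    constantCoeff (Lop K k lam m (Lop K k lam n 1))
      = if m + n = 0 then gam k lam m else 0 := by
  set q := Lop K k lam n 1 with hq
  set N := max (bnd q) m with hN
  have hb : bnd q ≤ N := le_max_left _ _
  have hmN : m ≤ N := le_max_right _ _
  have h0 : 0 ≤ bnd q := bnd_nonneg q
  rw [Lop_apply k lam m q (s := Finset.Icc (m - N) N)
    (Finset.Icc_subset_Icc (by omega) (by omega))]
  rw [map_sub, cc_smul, cc_smul, map_sum]
  have hBm : constantCoeff (Bop K k m q)
      = (if m + n = 0 then ((m:K)*k) else 0) * (-(lam * ((n:K)+1))) := by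
    rw [hq, Bop_Lop_one k lam (by omega : (0:ℤ) < m) n, map_sub, cc_smul, cc_smul]
    have c1 : constantCoeff (if m < -n then ((2*(m:K))*k) • vX K (-n-m) else 0) = 0 := by
      by_cases h : m < -n
      · rw [if_pos h, cc_smul, cc_vX, mul_zero]
      · rw [if_neg h, map_zero]
    rw [c1, mul_zero, zero_sub]
    by_cases h : m + n = 0
    · rw [if_pos (show m = -n by omega), if_pos h, cc_smul, map_one]
      ring
    · rw [if_neg (show ¬ m = -n by omega), if_neg h, map_zero, mul_zero, neg_zero, zero_mul]
  have hterm : ∀ j ∈ Finset.Icc (m - N) N, constantCoeff (NOp K k (m - j) j q)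
      = if j ∈ Finset.Ioo (0:ℤ) m
          then (if m + n = 0 then ((m:K)-(j:K))*(j:K)*k else 0) else 0 := by
    intro j hj
    by_cases hjm : 0 < j ∧ j < m
    · rw [if_pos (Finset.mem_Ioo.mpr hjm)]
      unfold NOp
      by_cases hle : m - j ≤ j
      · rw [if_pos hle]
        show constantCoeff (Bop K k (m-j) (Bop K k j q)) = _
        rw [hq, cc_BB k lam hk (by omega) (by omega) n]
        by_cases hmn : m + n = 0
        · rw [if_pos (by omega : (m - j) + j = -n), if_pos hmn]
          push_cast
          ring
        · rw [if_neg (by omega), if_neg hmn]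
      · rw [if_neg hle]
        show constantCoeff (Bop K k j (Bop K k (m-j) q)) = _
        rw [hq, cc_BB k lam hk (by omega) (by omega) n]
        by_cases hmn : m + n = 0
        · rw [if_pos (by omega : j + (m - j) = -n), if_pos hmn]
          push_cast
          ring
        · rw [if_neg (by omega), if_neg hmn]
    · rw [if_neg (by rw [Finset.mem_Ioo]; omega)]
      exact cc_NOp k (m - j) j (by omega) q
  rw [Finset.sum_congr rfl hterm, Finset.sum_ite_mem,
    Finset.inter_eq_right.mpr (fun j hj => by
      rw [Finset.mem_Ioo] at hj; rw [Finset.mem_Icc]; omega)]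
  by_cases hmn : m + n = 0
  · simp only [if_pos hmn]
    have hs : ∑ j ∈ Finset.Ioo (0:ℤ) m, ((m:K)-(j:K))*(j:K)*k
        = (((m:K)^3 - (m:K))/6) * k := by
      rw [← Finset.sum_mul, sum_Ioo m (by omega)]
    rw [hs, hBm, if_pos hmn]
    have hcast : (n:K) = -(m:K) := by
      have : (n:ℤ) = -m := by omega
      exact_mod_cast congrArg (Int.cast : ℤ → K) this
    rw [hcast]
    unfold gam
    field_simp
    ring
  · simp only [if_neg hmn]
    rw [hBm, if_neg hmn, zero_mul]
    simp

lemma eq_zero_of_pderiv (p : Fock K)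
    (hd : ∀ a : {n : ℕ // 0 < n}, pderiv a p = 0)
    (hc : constantCoeff p = 0) : p = 0 := by
  apply MvPolynomial.ext
  intro σ
  rw [coeff_zero]
  by_cases hσ : σ = 0
  · subst hσ
    rw [constantCoeff_eq] at hc
    exact hc
  · obtain ⟨a, ha⟩ : ∃ a, σ a ≠ 0 := by
      by_contra hcon
      push_neg at hcon
      exact hσ (Finsupp.ext fun b => hcon b)
    by_cases hsupp : σ ∈ p.support
    · have h1 : pderiv a p = ∑ v ∈ p.support,
          monomial (v - Finsupp.single a 1) (coeff v p * ((v a : ℕ) : K)) := by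
        calc (pderiv a) p = (pderiv a).toLinearMap p := rfl
        _ = (pderiv a).toLinearMap (∑ v ∈ p.support, monomial v (coeff v p)) := by
              rw [← p.as_sum]
        _ = ∑ v ∈ p.support, (pderiv a).toLinearMap (monomial v (coeff v p)) :=
              map_sum _ _ _
        _ = ∑ v ∈ p.support, monomial (v - Finsupp.single a 1) (coeff v p * ((v a : ℕ) : K)) :=
              Finset.sum_congr rfl fun v _ => pderiv_monomial
      have h2 : coeff (σ - Finsupp.single a 1) (pderiv a p)
          = coeff σ p * ((σ a : ℕ) : K) := by
        rw [h1, coeff_sum]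
        rw [Finset.sum_eq_single σ
          (fun v hv hvne => ?_) (fun habs => absurd hsupp habs)]
        · rw [coeff_monomial, if_pos rfl]
        · rw [coeff_monomial]
          by_cases hcond : v - Finsupp.single a 1 = σ - Finsupp.single a 1
          · rw [if_pos hcond]
            have hva : v a = 0 := by
              by_contra hva
              apply hvne
              apply Finsupp.ext
              intro b
              have hb := congrArg (fun f => f b) hcond
              simp only [Finsupp.tsub_apply, Finsupp.single_apply] at hb
              by_cases hab : a = b
              · subst hab
                simp at hb
                omega
              · simpa [hab] using hb
            rw [hva]
            simp
          · rw [if_neg hcond]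
      rw [hd a, coeff_zero] at h2
      have hσa : ((σ a : ℕ) : K) ≠ 0 := Nat.cast_ne_zero.mpr ha
      rcases mul_eq_zero.mp h2.symm with h | h
      · exact h
      · exact absurd h hσa
    · exact notMem_support_iff.mp hsupp

lemma Lop_one_nonneg {n : ℤ} (hn : 0 ≤ n) : Lop K k lam n 1 = 0 := by
  rw [Lop_one]
  unfold Qpoly
  rw [Finset.Ioo_eq_empty (by omega), Finset.sum_empty, if_neg (by omega)]
  simp

lemma cc_Lop_one (p : ℤ) : constantCoeff (Lop K k lam p 1) = 0 := by
  rw [Lop_one, map_sub, cc_smul, cc_smul]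
  have h1 : constantCoeff (Qpoly K p) = 0 := by
    unfold Qpoly
    rw [map_sum, Finset.sum_congr rfl
      (fun j _ => by rw [map_mul, cc_vX, zero_mul]), Finset.sum_const, smul_zero]
  have h2 : constantCoeff (if p < 0 then vX K (-p) else (0:Fock K)) = 0 := by
    by_cases h : p < 0
    · rw [if_pos h, cc_vX]
    · rw [if_neg h, map_zero]
  rw [h1, h2, mul_zero, mul_zero, sub_zero]

lemma Cop_zero' (m n : ℤ) : Cop k lam m n 0 = 0 := by
  unfold Cop
  rw [Lop_zero, Lop_zero, Lop_zero, Lop_zero]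
  simp

lemma Cop_add (m n : ℤ) (v w : Fock K) :
    Cop k lam m n (v + w) = Cop k lam m n v + Cop k lam m n w := by
  unfold Cop
  simp only [Lop_add]
  module

lemma Cop_smul (m n : ℤ) (c : K) (v : Fock K) :
    Cop k lam m n (c • v) = c • Cop k lam m n v := by
  unfold Cop
  simp only [Lop_smul]
  module

lemma vX_coe (a : {n : ℕ // 0 < n}) : vX K ((a:ℕ):ℤ) = X a := by
  unfold vX
  rw [dif_pos (by exact_mod_cast a.2)]
  congr 1

lemma Cop_one (hk : k ≠ 0) (m n : ℤ) : Cop k lam m n 1 = 0 := by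
  apply eq_zero_of_pderiv
  · intro a
    have ha : (0:ℤ) < ((a:ℕ):ℤ) := by exact_mod_cast a.2
    have h1 : Bop K k ((a:ℕ):ℤ) (Cop k lam m n 1) = 0 := by
      rw [← Cop_Bop_comm k lam hk m n _ 1, Bop_pos_one k ha, Cop_zero']
    rw [Bop_pos_apply k ha] at h1
    have he : (⟨(((a:ℕ):ℤ)).toNat, by omega⟩ : {n : ℕ // 0 < n}) = a :=
      Subtype.ext (by simp)
    rw [he] at h1
    have hne : ((((a:ℕ):ℤ)):K) * k ≠ 0 := by
      apply mul_ne_zero _ hk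
      have : (0:ℤ) < ((a:ℕ):ℤ) := ha
      intro hcon
      have : (((a:ℕ):ℤ):K) = ((0:ℤ):K) := by rw [hcon]; norm_num
      have : ((a:ℕ):ℤ) = 0 := by exact_mod_cast this
      omega
    rcases smul_eq_zero.mp h1 with h | h
    · exact absurd h hne
    · exact h
  · unfold Cop
    rw [map_sub, map_sub, map_sub, cc_smul, cc_smul, map_one, mul_one, cc_Lop_one, mul_zero,
      sub_zero]
    by_cases h1 : 0 ≤ m <;> by_cases h2 : 0 ≤ n
    · rw [Lop_one_nonneg k lam h2, Lop_zero, Lop_one_nonneg k lam h1, Lop_zero, map_zero]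
      by_cases hmn : m + n = 0
      · have hm0 : m = 0 := by omega
        rw [if_pos hmn, hm0]
        unfold gam
        norm_num
      · rw [if_neg hmn]
        simp
    · push_neg at h2
      rcases lt_or_eq_of_le h1 with hm1 | hm1
      · rw [cc_Lop_Lop_one k lam hk (by omega) n, cc_Lop_nonpos k lam (by omega : n ≤ 0)]
        try ring
      · rw [← hm1] at *
        rw [cc_Lop_nonpos k lam (le_refl 0), cc_Lop_nonpos k lam (by omega : n ≤ 0),
          if_neg (by omega)]
        ring
    · push_neg at h1
      rcases lt_or_eq_of_le h2 with hn1 | hn1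
      · rw [cc_Lop_Lop_one k lam hk (by omega) m, cc_Lop_nonpos k lam (by omega : m ≤ 0)]
        by_cases hmn : m + n = 0
        · rw [if_pos (by omega : n + m = 0), if_pos hmn]
          have hcast : (n:K) = -(m:K) := by
            have : (n:ℤ) = -m := by omega
            exact_mod_cast congrArg (Int.cast : ℤ → K) this
          unfold gam
          rw [hcast]
          ring
        · rw [if_neg (by omega), if_neg hmn]
          ring
      · rw [← hn1] at *
        rw [cc_Lop_nonpos k lam (le_refl 0), cc_Lop_nonpos k lam (by omega : m ≤ 0),
          if_neg (by omega)]
        ring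
    · rw [cc_Lop_nonpos k lam (by omega : m ≤ 0), cc_Lop_nonpos k lam (by omega : n ≤ 0),
        if_neg (by omega)]
      ring

lemma Cop_eq_zero (hk : k ≠ 0) (m n : ℤ) (v : Fock K) : Cop k lam m n v = 0 := by
  induction v using MvPolynomial.induction_on with
  | C c =>
      have hc : (C c : Fock K) = c • 1 := by rw [smul_eq_C_mul, mul_one]
      rw [hc, Cop_smul, Cop_one k lam hk, smul_zero]
  | add p q hp hq => rw [Cop_add, hp, hq, add_zero]
  | mul_X p a hp =>
      have hxa : Bop K k (-((a:ℕ):ℤ)) p = X a * p := by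
        rw [Bop_neg_apply k (by
          have : (0:ℤ) < ((a:ℕ):ℤ) := by exact_mod_cast a.2
          omega), neg_neg, vX_coe]
      rw [mul_comm, ← hxa, Cop_Bop_comm k lam hk, hp, map_zero]

end FF

/-- The operators `L_n` are well defined (linear) on the Fock
module and satisfy the Virasoro relations
`[L_m, L_n] = (m − n) L_{m+n} + ((m³ − m)/12) δ_{m+n,0} c · id` with central
charge `c = 1 − 12 k λ²`. -/
theorem stmt16 (K : Type*) [Field K] [CharZero K] (k lam : K) (hk : k ≠ 0) :
    (∀ n : ℤ, IsLinearMap K (Lop K k lam n)) ∧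
    (∀ (m n : ℤ) (v : Fock K),
      Lop K k lam m (Lop K k lam n v) - Lop K k lam n (Lop K k lam m v)
        = ((m : K) - (n : K)) • Lop K k lam (m + n) v
          + (if m + n = 0 then (((m : K) ^ 3 - (m : K)) / 12) * (1 - 12 * k * lam ^ 2)
              else 0) • v) := by
  constructor
  · intro n
    exact ⟨fun x y => FF.Lop_add k lam n x y, fun c x => FF.Lop_smul k lam n c x⟩
  · intro m n v
    have h := FF.Cop_eq_zero k lam hk m n v
    unfold FF.Cop FF.gam at h
    linear_combination (norm := module) h
end
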